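/- Let ω be an n-dimensional linear subspace of ℝ^m with n ≤ m, and let p ≤ m − n + 1. Then for any p vectors x₁, …, x_p ∈ ω, there exist p vectors x_{c1}, …, x_{cp} ∈ ℝ^m such that the orthogonal projection of x_{ci} onto ω equals x_i for each i = 1, …, p, and x_{ci}' x_{cj} = 0 for all i ≠ j. -/

import Mathlib

noncomputable def rowC (g : ℕ → ℕ → ℝ) : ℕ → ℕ → ℝ
  | i, j => g i j - ∑ k ∈ (Finset.range i).attach, rowC g k.1 i * rowC g k.1 j
termination_by i => i
decreasing_by all_goals exact Finset.mem_range.1 k.2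

lemma rowC_eq (g : ℕ → ℕ → ℝ) (i j : ℕ) :
    rowC g i j = g i j - ∑ k ∈ Finset.range i, rowC g k i * rowC g k j := by
  rw [rowC, Finset.sum_attach (Finset.range i) (fun k => rowC g k i * rowC g k j)]

noncomputable def aC (g : ℕ → ℕ → ℝ) (j k : ℕ) : ℝ :=
  if k < j then rowC g k j else if k = j then 1 else 0

lemma aC_sum (g : ℕ → ℕ → ℝ) {q i j : ℕ} (hij : i < j) (hiq : i < q) :
    ∑ k ∈ Finset.range q, aC g i k * aC g j k = g i j := by
  rw [← Finset.sum_subset (Finset.range_subset_range.2 (show i + 1 ≤ q from hiq)) (by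
    intro k hk hk2
    simp only [Finset.mem_range] at hk hk2
    have : ¬ k < i := by omega
    have : k ≠ i := by omega
    simp [aC, *])]
  rw [Finset.sum_range_succ]
  have h1 : aC g i i = 1 := by simp [aC]
  have h2 : aC g j i = rowC g i j := by simp [aC, hij]
  have h3 : ∀ k ∈ Finset.range i, aC g i k * aC g j k = rowC g k i * rowC g k j := by
    intro k hk
    simp only [Finset.mem_range] at hk
    simp [aC, hk, hk.trans hij]
  rw [Finset.sum_congr rfl h3, h1, h2, rowC_eq]
  ring



/-- Proposition 1.
Let `ω` be an `n`-dimensional subspace of `ℝ^m` with `n ≤ m`, and let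
`p ≤ m - n + 1`.  Then for any `p` vectors `x₁, …, x_p ∈ ω` there exist
`p` vectors `x_{c1}, …, x_{cp} ∈ ℝ^m` whose orthogonal projections onto `ω`
are `x₁, …, x_p` and which are mutually orthogonal. -/
theorem stmt1 {m n p : ℕ} (ω : Submodule ℝ (EuclideanSpace ℝ (Fin m)))
    (hω : Module.finrank ℝ ω = n) (hnm : n ≤ m) (hp : p ≤ m - n + 1)
    (x : Fin p → EuclideanSpace ℝ (Fin m)) (hx : ∀ i, x i ∈ ω) :
    ∃ xc : Fin p → EuclideanSpace ℝ (Fin m),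
      (∀ i, (ω.orthogonalProjection (xc i) : EuclideanSpace ℝ (Fin m)) = x i) ∧
      ∀ i j, i ≠ j → inner ℝ (xc i) (xc j) = (0 : ℝ) := by
  cases p with
  | zero => exact ⟨Fin.elim0, fun i => i.elim0, fun i => i.elim0⟩
  | succ q =>
    have hq : q ≤ m - n := by omega
    -- dimension of the orthogonal complement
    have hdim : q ≤ Module.finrank ℝ ωᗮ := by
      have h := Submodule.finrank_add_finrank_orthogonal (K := ω)
      rw [hω, finrank_euclideanSpace_fin] at h
      omega
    -- orthonormal family in ωᗮ
    set B := stdOrthonormalBasis ℝ ωᗮ with hB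
    let f : Fin q → EuclideanSpace ℝ (Fin m) :=
      fun k => (B (Fin.castLE hdim k) : EuclideanSpace ℝ (Fin m))
    have hfmem : ∀ k, f k ∈ ωᗮ := fun k => (B (Fin.castLE hdim k)).2
    have hf : Orthonormal ℝ f := by
      have h := B.orthonormal.comp (Fin.castLE hdim) (Fin.castLE_injective hdim)
      exact h.comp_linearIsometry ωᗮ.subtypeₗᵢ
    -- targets
    set g : ℕ → ℕ → ℝ := fun i j =>
      if h : i < q + 1 ∧ j < q + 1 then -(inner ℝ (x ⟨i, h.1⟩) (x ⟨j, h.2⟩) : ℝ) else 0 with hg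
    -- correction vectors
    set z : Fin (q + 1) → EuclideanSpace ℝ (Fin m) :=
      fun i => ∑ k : Fin q, aC g i k • f k with hzdef
    have hzmem : ∀ i, z i ∈ ωᗮ := fun i =>
      Submodule.sum_mem _ (fun k _ => Submodule.smul_mem _ _ (hfmem k))
    have hzinner : ∀ i j : Fin (q + 1), (i : ℕ) < (j : ℕ) →
        (inner ℝ (z i) (z j) : ℝ) = -(inner ℝ (x i) (x j) : ℝ) := by
      intro i j hij
      rw [hzdef]
      simp only
      rw [hf.inner_sum (fun k : Fin q => aC g i k) (fun k : Fin q => aC g j k) Finset.univ]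
      have : ∑ k : Fin q, (starRingEnd ℝ) (aC g (i : ℕ) (k : ℕ)) * aC g (j : ℕ) (k : ℕ)
          = ∑ k ∈ Finset.range q, aC g (i : ℕ) k * aC g (j : ℕ) k := by
        rw [← Fin.sum_univ_eq_sum_range]
        simp
      rw [this, aC_sum g hij (by omega : (i : ℕ) < q)]
      rw [hg]
      simp only [i.isLt, j.isLt, and_self, dif_pos]
    refine ⟨fun i => x i + z i, ?_, ?_⟩
    · intro i
      rw [map_add, Submodule.coe_add,
        Submodule.orthogonalProjectionOnto_mem_subspace_eq_self ⟨x i, hx i⟩,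
        Submodule.orthogonalProjectionOnto_apply_of_mem_orthogonal (hzmem i)]
      simp
    · intro i j hij
      have key : ∀ i j : Fin (q + 1), (i : ℕ) < (j : ℕ) →
          (inner ℝ (x i + z i) (x j + z j) : ℝ) = 0 := by
        intro i j hlt
        rw [inner_add_left, inner_add_right, inner_add_right]
        rw [Submodule.inner_right_of_mem_orthogonal (hx i) (hzmem j),
          Submodule.inner_left_of_mem_orthogonal (hx j) (hzmem i),
          hzinner i j hlt]
        ring
      rcases Nat.lt_or_ge (i : ℕ) (j : ℕ) with h | h
      · exact key i j h
      · have h' : (j : ℕ) < (i : ℕ) := by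
          rcases Nat.lt_or_ge (j : ℕ) (i : ℕ) with h2 | h2
          · exact h2
          · exact absurd (Fin.ext (by omega)) hij
        rw [real_inner_comm]
        exact key j i h'
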